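/- Fix constants C_a, C_b, C_{cd} > 0. Then for every ε > 0 there exist l_ε, u_ε ∈ (0,1), depending only on ε, C_a, C_b, C_{cd}, such that for all parameters a ∈ [1/C_a, C_a], b with |b| ≤ C_b, and 0 ≤ c < d ≤ 1 with d − c ∈ [1/C_{cd}, C_{cd}]: P(θ) − c ≤ ε for all θ ∈ (0, l_ε], and d − P(θ) ≤ ε for all θ ∈ [u_ε, 1). In particular, the family of transformed 4PL IRFs with such parameters satisfies the uniform tail condition with lower limit c and upper limit d. -/

import Mathlib

open Set Filter Topology MeasureTheory

/-- The standard normal density `φ(x) = (2π)^{-1/2} exp(-x²/2)`. -/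
noncomputable def stdNormalPDF (x : ℝ) : ℝ :=
  (Real.sqrt (2 * Real.pi))⁻¹ * Real.exp (-(x ^ 2) / 2)

/-- The standard normal CDF `Φ(x) = ∫_{-∞}^x φ`. -/
noncomputable def stdNormalCDF (x : ℝ) : ℝ :=
  ∫ t in Set.Iic x, stdNormalPDF t

/-- The inverse `Φ⁻¹ : (0,1) → ℝ` of the standard normal CDF. -/
noncomputable def stdNormalCDFInv : ℝ → ℝ :=
  Function.invFun stdNormalCDF

/-- The transformed normal-ogive item response function
`P_{a,b}(θ) = Φ(a(Φ⁻¹(θ) − b))`. -/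
noncomputable def ogiveIRF (a b θ : ℝ) : ℝ :=
  stdNormalCDF (a * (stdNormalCDFInv θ - b))

/-- The derivative of the transformed normal-ogive item response function,
`P'_{a,b}(θ) = a·φ(a(Φ⁻¹(θ) − b))/φ(Φ⁻¹(θ))`. -/
noncomputable def ogiveIRFDeriv (a b θ : ℝ) : ℝ :=
  a * stdNormalPDF (a * (stdNormalCDFInv θ - b)) / stdNormalPDF (stdNormalCDFInv θ)

/-- The standard logistic function `g(x) = eˣ/(1+eˣ)`. -/
noncomputable def logisticFn (x : ℝ) : ℝ :=
  Real.exp x / (1 + Real.exp x)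

/-- The derivative of the standard logistic function, `g'(x) = eˣ/(1+eˣ)²`. -/
noncomputable def logisticFnDeriv (x : ℝ) : ℝ :=
  Real.exp x / (1 + Real.exp x) ^ 2

/-- The transformed four-parameter logistic (4PL) item response function
`P(θ) = c + (d−c)·g(a(Φ⁻¹(θ) − b))`. -/
noncomputable def fourPL (a b c d θ : ℝ) : ℝ :=
  c + (d - c) * logisticFn (a * (stdNormalCDFInv θ - b))

/-- The derivative of the transformed 4PL item response function,
`P'(θ) = (d−c)·a·g'(a(Φ⁻¹(θ) − b))/φ(Φ⁻¹(θ))`. -/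
noncomputable def fourPLDeriv (a b c d θ : ℝ) : ℝ :=
  (d - c) * a * logisticFnDeriv (a * (stdNormalCDFInv θ - b)) /
    stdNormalPDF (stdNormalCDFInv θ)

lemma sqrt2pi_pos : 0 < Real.sqrt (2 * Real.pi) :=
  Real.sqrt_pos.2 (by positivity)

lemma stdNormalPDF_pos (x : ℝ) : 0 < stdNormalPDF x := by
  unfold stdNormalPDF; positivity

lemma stdNormalPDF_integrable : Integrable stdNormalPDF := by
  have h := (integrable_exp_neg_mul_sq (b := 1/2) (by norm_num)).const_mul
    (Real.sqrt (2 * Real.pi))⁻¹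
  convert h using 2 with x
  unfold stdNormalPDF
  ring_nf

lemma stdNormalPDF_even (x : ℝ) : stdNormalPDF (-x) = stdNormalPDF x := by
  unfold stdNormalPDF; ring_nf

lemma integral_stdNormalPDF : ∫ x, stdNormalPDF x = 1 := by
  unfold stdNormalPDF
  rw [MeasureTheory.integral_const_mul]
  have : ∀ x : ℝ, Real.exp (-(x ^ 2) / 2) = Real.exp (-(1/2) * x ^ 2) := by
    intro x; ring_nf
  simp_rw [this, integral_gaussian]
  rw [show Real.pi / (1/2) = 2 * Real.pi by ring]
  rw [inv_mul_cancel₀ sqrt2pi_pos.ne']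

lemma stdNormalCDF_sub (x y : ℝ) :
    stdNormalCDF y - stdNormalCDF x = ∫ t in x..y, stdNormalPDF t :=
  intervalIntegral.integral_Iic_sub_Iic stdNormalPDF_integrable.integrableOn
    stdNormalPDF_integrable.integrableOn

lemma stdNormalCDF_strictMono : StrictMono stdNormalCDF := by
  intro x y hxy
  have h := intervalIntegral.intervalIntegral_pos_of_pos
    (f := stdNormalPDF) (stdNormalPDF_integrable.intervalIntegrable) stdNormalPDF_pos hxy
  have := stdNormalCDF_sub x y
  linarith

lemma stdNormalCDF_continuous : Continuous stdNormalCDF := by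
  have h : Continuous fun y => stdNormalCDF 0 + ∫ t in (0:ℝ)..y, stdNormalPDF t :=
    continuous_const.add (stdNormalPDF_integrable.continuous_primitive 0)
  refine h.congr fun y => ?_
  have := stdNormalCDF_sub 0 y
  linarith

lemma stdNormalCDF_le (x : ℝ) :
    stdNormalCDF x ≤ (Real.sqrt (2 * Real.pi))⁻¹ * Real.exp (1/2) * Real.exp x := by
  have hint : IntegrableOn (fun t => (Real.sqrt (2 * Real.pi))⁻¹ * Real.exp (1/2) * Real.exp t)
      (Set.Iic x) := (integrableOn_exp_Iic x).const_mul _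
  have hle : ∀ t ∈ Set.Iic x, stdNormalPDF t ≤
      (Real.sqrt (2 * Real.pi))⁻¹ * Real.exp (1/2) * Real.exp t := by
    intro t _
    unfold stdNormalPDF
    rw [mul_assoc, ← Real.exp_add]
    refine mul_le_mul_of_nonneg_left ?_ (by positivity)
    refine Real.exp_le_exp.2 ?_
    nlinarith [sq_nonneg (t + 1)]
  calc stdNormalCDF x ≤ ∫ t in Set.Iic x,
        (Real.sqrt (2 * Real.pi))⁻¹ * Real.exp (1/2) * Real.exp t :=
      MeasureTheory.setIntegral_mono_on stdNormalPDF_integrable.integrableOn hint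
        measurableSet_Iic hle
    _ = (Real.sqrt (2 * Real.pi))⁻¹ * Real.exp (1/2) * Real.exp x := by
      rw [MeasureTheory.integral_const_mul, integral_exp_Iic]

lemma one_sub_stdNormalCDF (x : ℝ) : 1 - stdNormalCDF x = stdNormalCDF (-x) := by
  have h := intervalIntegral.integral_Iic_add_Ioi (b := x) (f := stdNormalPDF)
    stdNormalPDF_integrable.integrableOn stdNormalPDF_integrable.integrableOn
  rw [integral_stdNormalPDF] at h
  have h2 : (∫ t in Set.Ioi x, stdNormalPDF t) = stdNormalCDF (-x) := by
    unfold stdNormalCDF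
    rw [← integral_comp_neg_Ioi x stdNormalPDF]
    exact MeasureTheory.setIntegral_congr_fun measurableSet_Ioi
      fun t _ => (stdNormalPDF_even t).symm
  unfold stdNormalCDF at *
  linarith [h2]

lemma stdNormalCDF_pos (x : ℝ) : 0 < stdNormalCDF x := by
  have h := stdNormalCDF_strictMono (show x - 1 < x by linarith)
  have h0 : 0 ≤ stdNormalCDF (x - 1) :=
    MeasureTheory.setIntegral_nonneg measurableSet_Iic fun t _ => (stdNormalPDF_pos t).le
  linarith

lemma stdNormalCDF_lt_one (x : ℝ) : stdNormalCDF x < 1 := by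
  have := stdNormalCDF_pos (-x)
  have := one_sub_stdNormalCDF x
  linarith

lemma stdNormalCDF_surjOn : ∀ θ ∈ Set.Ioo (0:ℝ) 1, ∃ x, stdNormalCDF x = θ := by
  intro θ hθ
  set K := (Real.sqrt (2 * Real.pi))⁻¹ * Real.exp (1/2) with hK
  have hKpos : 0 < K := by positivity
  obtain ⟨hθ0, hθ1⟩ := hθ
  -- lower point
  set x₁ := Real.log (θ / (2 * K)) with hx₁
  have hΦ₁ : stdNormalCDF x₁ < θ := by
    have := stdNormalCDF_le x₁
    rw [hx₁, Real.exp_log (by positivity)] at this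
    calc stdNormalCDF x₁ ≤ K * (θ / (2 * K)) := this
      _ = θ / 2 := by field_simp
      _ < θ := by linarith
  set x₂ := -Real.log ((1 - θ) / (2 * K)) with hx₂
  have hΦ₂ : θ < stdNormalCDF x₂ := by
    have h := stdNormalCDF_le (-x₂)
    rw [hx₂, neg_neg, Real.exp_log (div_pos (by linarith) (by positivity))] at h
    have h2 := one_sub_stdNormalCDF x₂
    rw [hx₂, neg_neg] at h2
    have hKK : K * ((1 - θ) / (2 * K)) = (1 - θ) / 2 := by field_simp
    rw [hKK] at h
    rw [hx₂]
    linarith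
  have hx12 : x₁ ≤ x₂ := by
    by_contra h
    push_neg at h
    exact absurd (stdNormalCDF_strictMono h) (by linarith)
  have := intermediate_value_Icc hx12 stdNormalCDF_continuous.continuousOn
  obtain ⟨x, _, hx⟩ := this ⟨hΦ₁.le, hΦ₂.le⟩
  exact ⟨x, hx⟩

lemma stdNormalCDF_inv_eq {θ : ℝ} (hθ : θ ∈ Set.Ioo (0:ℝ) 1) :
    stdNormalCDF (stdNormalCDFInv θ) = θ :=
  Function.invFun_eq (stdNormalCDF_surjOn θ hθ)

lemma stdNormalCDFInv_le {θ x : ℝ} (hθ : θ ∈ Set.Ioo (0:ℝ) 1)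
    (h : θ ≤ stdNormalCDF x) : stdNormalCDFInv θ ≤ x := by
  have := stdNormalCDF_inv_eq hθ
  by_contra hc
  push_neg at hc
  exact absurd (stdNormalCDF_strictMono hc) (by linarith)

lemma le_stdNormalCDFInv {θ x : ℝ} (hθ : θ ∈ Set.Ioo (0:ℝ) 1)
    (h : stdNormalCDF x ≤ θ) : x ≤ stdNormalCDFInv θ := by
  have := stdNormalCDF_inv_eq hθ
  by_contra hc
  push_neg at hc
  exact absurd (stdNormalCDF_strictMono hc) (by linarith)

lemma logisticFn_nonneg (t : ℝ) : 0 ≤ logisticFn t := by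
  unfold logisticFn; positivity

lemma logisticFn_le_one (t : ℝ) : logisticFn t ≤ 1 := by
  unfold logisticFn
  rw [div_le_one (by positivity)]
  linarith [Real.exp_pos t]

lemma logisticFn_le_exp (t : ℝ) : logisticFn t ≤ Real.exp t :=
  div_le_self (Real.exp_pos t).le (by linarith [Real.exp_pos t])

lemma one_sub_logisticFn_le_exp (t : ℝ) : 1 - logisticFn t ≤ Real.exp (-t) := by
  have h1 : 1 - logisticFn t = 1 / (1 + Real.exp t) := by
    unfold logisticFn
    field_simp; ring
  rw [h1, Real.exp_neg, ← one_div]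
  exact one_div_le_one_div_of_le (Real.exp_pos t) (by linarith [Real.exp_pos t])

/-- Proposition 2(ii), Condition (T) part: for `C_a, C_b, C_{cd} > 0`, the family of
transformed 4PL IRFs with `a ∈ [1/C_a, C_a]`, `|b| ≤ C_b`, and `0 ≤ c < d ≤ 1` with
`d − c ∈ [1/C_{cd}, C_{cd}]` satisfies the uniform tail condition with lower limit `c`
and upper limit `d`: for every `ε > 0` there exist `l_ε, u_ε ∈ (0,1)` such that
`P(θ) − c ≤ ε` on `(0, l_ε]` and `d − P(θ) ≤ ε` on `[u_ε, 1)`. -/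
theorem fourPL_uniform_tail_condition (Ca Cb Ccd : ℝ)
    (hCa : 0 < Ca) (hCb : 0 < Cb) (hCcd : 0 < Ccd) :
    ∀ ε : ℝ, 0 < ε →
      ∃ l u : ℝ, l ∈ Set.Ioo (0 : ℝ) 1 ∧ u ∈ Set.Ioo (0 : ℝ) 1 ∧
        ∀ a b c d : ℝ, a ∈ Set.Icc (1 / Ca) Ca → |b| ≤ Cb →
          0 ≤ c → c < d → d ≤ 1 → d - c ∈ Set.Icc (1 / Ccd) Ccd →
          (∀ θ ∈ Set.Ioc (0 : ℝ) l, fourPL a b c d θ - c ≤ ε) ∧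
          (∀ θ ∈ Set.Ico u (1 : ℝ), d - fourPL a b c d θ ≤ ε) := by
  intro ε hε
  set M : ℝ := max 0 (Real.log (Ccd / ε)) with hM
  have hM0 : 0 ≤ M := le_max_left _ _
  have hexpM : Real.exp (-M) ≤ ε / Ccd := by
    rw [← Real.exp_log (div_pos hε hCcd)]
    refine Real.exp_le_exp.2 ?_
    have h1 : Real.log (Ccd / ε) ≤ M := le_max_right _ _
    have h2 : Real.log (ε / Ccd) = - Real.log (Ccd / ε) := by
      rw [← Real.log_inv]
      congr 1
      field_simp
    linarith
  set x₀ : ℝ := Cb + Ca * M with hx₀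
  refine ⟨stdNormalCDF (-x₀), stdNormalCDF x₀,
    ⟨stdNormalCDF_pos _, stdNormalCDF_lt_one _⟩,
    ⟨stdNormalCDF_pos _, stdNormalCDF_lt_one _⟩, ?_⟩
  intro a b c d ha hb _hc hcd _hd1 hdc
  obtain ⟨ha1, _ha2⟩ := ha
  obtain ⟨_hdc1, hdc2⟩ := hdc
  have hCa' : (0:ℝ) < 1 / Ca := by positivity
  have haPos : 0 < a := lt_of_lt_of_le hCa' ha1
  have hb' := abs_le.1 hb
  have key : ∀ t : ℝ, t ≤ -M → (d - c) * logisticFn t ≤ ε := by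
    intro t ht
    calc (d - c) * logisticFn t ≤ Ccd * Real.exp (-M) :=
          mul_le_mul hdc2 ((logisticFn_le_exp t).trans (Real.exp_le_exp.2 ht))
            (logisticFn_nonneg t) hCcd.le
      _ ≤ Ccd * (ε / Ccd) := mul_le_mul_of_nonneg_left hexpM hCcd.le
      _ = ε := by field_simp
  have key2 : ∀ t : ℝ, M ≤ t → (d - c) * (1 - logisticFn t) ≤ ε := by
    intro t ht
    have h1 : 1 - logisticFn t ≤ Real.exp (-M) :=
      (one_sub_logisticFn_le_exp t).trans (Real.exp_le_exp.2 (by linarith))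
    calc (d - c) * (1 - logisticFn t) ≤ Ccd * Real.exp (-M) :=
          mul_le_mul hdc2 h1 (by linarith [logisticFn_le_one t]) hCcd.le
      _ ≤ Ccd * (ε / Ccd) := mul_le_mul_of_nonneg_left hexpM hCcd.le
      _ = ε := by field_simp
  constructor
  · intro θ hθ
    have hθ' : θ ∈ Set.Ioo (0:ℝ) 1 := ⟨hθ.1, lt_of_le_of_lt hθ.2 (stdNormalCDF_lt_one _)⟩
    have hx : stdNormalCDFInv θ ≤ -x₀ := stdNormalCDFInv_le hθ' hθ.2
    have ht : a * (stdNormalCDFInv θ - b) ≤ -M := by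
      have hxb : stdNormalCDFInv θ - b ≤ -(Ca * M) := by
        rw [hx₀] at hx
        linarith
      have h1 : a * (stdNormalCDFInv θ - b) ≤ (1 / Ca) * (stdNormalCDFInv θ - b) :=
        mul_le_mul_of_nonpos_right ha1 (by nlinarith)
      have h2 : (1 / Ca) * (stdNormalCDFInv θ - b) ≤ (1 / Ca) * (-(Ca * M)) :=
        mul_le_mul_of_nonneg_left hxb hCa'.le
      have h3 : (1 / Ca) * (-(Ca * M)) = -M := by field_simp
      linarith
    have h := key _ ht
    unfold fourPL
    linarith
  · intro θ hθ
    have hθ' : θ ∈ Set.Ioo (0:ℝ) 1 := ⟨lt_of_lt_of_le (stdNormalCDF_pos _) hθ.1, hθ.2⟩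
    have hx : x₀ ≤ stdNormalCDFInv θ := le_stdNormalCDFInv hθ' hθ.1
    have ht : M ≤ a * (stdNormalCDFInv θ - b) := by
      have hxb : Ca * M ≤ stdNormalCDFInv θ - b := by
        rw [hx₀] at hx
        linarith
      have h0 : (0:ℝ) ≤ stdNormalCDFInv θ - b := le_trans (by positivity) hxb
      have h1 : (1 / Ca) * (stdNormalCDFInv θ - b) ≤ a * (stdNormalCDFInv θ - b) :=
        mul_le_mul_of_nonneg_right ha1 h0
      have h2 : (1 / Ca) * (Ca * M) ≤ (1 / Ca) * (stdNormalCDFInv θ - b) :=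
        mul_le_mul_of_nonneg_left hxb hCa'.le
      have h3 : (1 / Ca) * (Ca * M) = M := by field_simp
      linarith
    have h := key2 _ ht
    have heq : d - fourPL a b c d θ =
        (d - c) * (1 - logisticFn (a * (stdNormalCDFInv θ - b))) := by
      unfold fourPL
      ring
    linarith [heq ▸ h]
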